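/- Let (γ_m)_{m∈ℤ} be a complex sequence, n an integer, and N ≥ 0 with the property that |γ_m| ≤ 4B/⟨2m⟩ for all |m| > N, where B > 0 and ⟨x⟩ = 1+|x|. Then for |n| > N, ∑_{m≠n, |m|>N} |γ_m|/|n−m| ≤ (2/⟨2N+2⟩)·(∑_{|m|>N} ⟨2m⟩²|γ_m|²)^{1/2}. -/

import Mathlib

open Real

lemma my_tsum_CS {ι : Type*} (f g : ι → ℝ) (hf : ∀ i, 0 ≤ f i) (hg : ∀ i, 0 ≤ g i)
    (hf2 : Summable fun i => f i ^ 2) (hg2 : Summable fun i => g i ^ 2) :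
    ∑' i, f i * g i ≤ √(∑' i, f i ^ 2) * √(∑' i, g i ^ 2) := by
  have hfg : Summable fun i => f i * g i := by
    apply Summable.of_nonneg_of_le (fun i => mul_nonneg (hf i) (hg i))
      (fun i => ?_) ((hf2.add hg2).div_const 2)
    rw [le_div_iff₀ (by norm_num : (0:ℝ) < 2)]
    nlinarith [sq_nonneg (f i - g i)]
  refine Summable.tsum_le_of_sum_le hfg fun s => ?_
  refine (Real.sum_mul_le_sqrt_mul_sqrt s f g).trans ?_
  have h1 : ∑ i ∈ s, f i ^ 2 ≤ ∑' i, f i ^ 2 := Summable.sum_le_tsum s (fun i _ => sq_nonneg _) hf2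
  have h2 : ∑ i ∈ s, g i ^ 2 ≤ ∑' i, g i ^ 2 := Summable.sum_le_tsum s (fun i _ => sq_nonneg _) hg2
  gcongr

lemma my_int_basel : (∑' k : ℤ, 1 / (k:ℝ)^2) = π^2/3 := by
  have h1 : HasSum (fun n : ℕ => 1/(((n:ℤ)):ℝ)^2) (π^2/6) := by
    refine hasSum_zeta_two.congr_fun fun n => ?_
    push_cast; ring
  have h2 : HasSum (fun n : ℕ => 1/(((-(n:ℕ)):ℤ):ℝ)^2) (π^2/6) := by
    refine hasSum_zeta_two.congr_fun fun n => ?_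
    push_cast; ring
  have h : HasSum (fun k : ℤ => 1/(k:ℝ)^2) (π^2/6 + π^2/6 - 1/((0:ℤ):ℝ)^2) :=
    HasSum.of_nat_of_neg h1 h2
  rw [h.tsum_eq]
  norm_num
  ring

theorem stmt_17 (γ : ℤ → ℂ) (B : ℝ) (hB : 0 < B) (N : ℤ) (hN : 0 ≤ N)
    (hγ : ∀ m : ℤ, N < |m| → ‖γ m‖ ≤ 4 * B / (1 + |2 * (m : ℝ)|))
    (hsum : Summable (fun m : {m : ℤ // N < |m|} =>
      (1 + |2 * ((m : ℤ) : ℝ)|) ^ 2 * ‖γ m‖ ^ 2))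
    (n : ℤ) (hn : N < |n|) :
    (∑' m : {m : ℤ // m ≠ n ∧ N < |m|}, ‖γ m‖ / |(n : ℝ) - m|)
      ≤ (2 / (1 + |2 * (N : ℝ) + 2|)) *
        Real.sqrt (∑' m : {m : ℤ // N < |m|},
          (1 + |2 * ((m : ℤ) : ℝ)|) ^ 2 * ‖γ m‖ ^ 2) := by
  set T := {m : ℤ // m ≠ n ∧ N < |m|}
  set f : T → ℝ := fun m => 1 / ((1 + |2 * ((m : ℤ) : ℝ)|) * |(n : ℝ) - (m : ℤ)|) with hfdef
  set g : T → ℝ := fun m => (1 + |2 * ((m : ℤ) : ℝ)|) * ‖γ m‖ with hgdef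
  -- basic positivity facts
  have hdist : ∀ m : T, (0:ℝ) < |(n : ℝ) - (m : ℤ)| := by
    intro m
    rw [abs_pos]
    have : ((m : ℤ) : ℝ) ≠ (n : ℝ) := by exact_mod_cast fun h => m.2.1 (by exact_mod_cast h)
    intro h
    exact this (by linarith)
  have hw : ∀ m : T, (0:ℝ) < 1 + |2 * ((m : ℤ) : ℝ)| := fun m => by positivity
  have hfnn : ∀ m : T, 0 ≤ f m := fun m => by positivity
  have hgnn : ∀ m : T, 0 ≤ g m := fun m => by positivity
  -- the inclusion into {m // N < |m|}
  have e2inj : Function.Injective (fun m : T => (⟨m.1, m.2.2⟩ : {m : ℤ // N < |m|})) := by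
    intro a b h
    simp only [Subtype.mk.injEq] at h
    exact Subtype.ext h
  have hg2 : Summable fun m : T => g m ^ 2 := by
    have := hsum.comp_injective e2inj
    refine this.congr fun m => ?_
    simp only [hgdef, Function.comp]
    rw [mul_pow]
  -- summability of f^2 via comparison with 1/(n-m)^2
  have einj : Function.Injective (fun m : T => n - (m : ℤ)) := by
    intro a b h
    simp only at h
    exact Subtype.ext (by omega)
  have hbase : Summable fun k : ℤ => 1 / (k:ℝ)^2 :=
    summable_one_div_int_pow.mpr one_lt_two
  have hcomp : Summable fun m : T => 1 / ((n:ℝ) - (m : ℤ))^2 := by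
    have := hbase.comp_injective einj
    refine this.congr fun m => ?_
    simp only [Function.comp]
    push_cast
    ring
  have hf2le : ∀ m : T, f m ^ 2 ≤ 1 / ((n:ℝ) - (m : ℤ))^2 := by
    intro m
    have hd2 : (0:ℝ) < |(n:ℝ) - (m : ℤ)|^2 := pow_pos (hdist m) 2
    have h1 : (1:ℝ) ≤ (1 + |2 * ((m : ℤ) : ℝ)|) ^ 2 := by nlinarith [abs_nonneg (2 * ((m : ℤ) : ℝ))]
    rw [hfdef]
    rw [div_pow, one_pow, mul_pow, ← sq_abs ((n:ℝ) - (m : ℤ))]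
    rw [div_le_div_iff₀ (by positivity) hd2]
    nlinarith
  have hf2 : Summable fun m : T => f m ^ 2 :=
    Summable.of_nonneg_of_le (fun m => sq_nonneg _) hf2le hcomp
  -- Cauchy-Schwarz
  have key : (∑' m : T, ‖γ m‖ / |(n : ℝ) - (m : ℤ)|) = ∑' m : T, f m * g m := by
    refine tsum_congr fun m => ?_
    symm
    calc f m * g m = ((1 + |2 * ((m : ℤ) : ℝ)|) * ‖γ m‖) /
          ((1 + |2 * ((m : ℤ) : ℝ)|) * |(n : ℝ) - (m : ℤ)|) := by
            rw [hfdef, hgdef]; rw [div_mul_eq_mul_div, one_mul]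
      _ = ‖γ m‖ / |(n : ℝ) - (m : ℤ)| := mul_div_mul_left _ _ (hw m).ne'
  -- bound on ∑ f^2
  obtain ⟨W, hWdef⟩ : ∃ W : ℝ, W = 1 + |2 * (N : ℝ) + 2| := ⟨_, rfl⟩
  rw [← hWdef]
  have hW : W = 2 * (N:ℝ) + 3 := by
    rw [hWdef, abs_of_nonneg (by push_cast; linarith [(by exact_mod_cast hN : (0:ℝ) ≤ (N:ℝ))])]
    ring
  have hNR : (0:ℝ) ≤ (N:ℝ) := by exact_mod_cast hN
  have hWpos : (0:ℝ) < W := by rw [hW]; linarith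
  have hfW : ∀ m : T, f m ^ 2 ≤ (1/W^2) * (1 / ((n:ℝ) - (m : ℤ))^2) := by
    intro m
    have hm : (N:ℝ) + 1 ≤ |((m : ℤ) : ℝ)| := by
      have : N + 1 ≤ |(m : ℤ)| := m.2.2
      calc (N:ℝ) + 1 = ((N + 1 : ℤ) : ℝ) := by push_cast; ring
        _ ≤ (|(m : ℤ)| : ℝ) := by exact_mod_cast this
        _ = |((m : ℤ) : ℝ)| := by push_cast; ring
    have hwm : W ≤ 1 + |2 * ((m : ℤ) : ℝ)| := by
      rw [hW, abs_mul, abs_of_nonneg (by norm_num : (0:ℝ) ≤ 2)]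
      linarith
    have hd2 : (0:ℝ) < |(n:ℝ) - (m : ℤ)|^2 := pow_pos (hdist m) 2
    have hWsq : W^2 ≤ (1 + |2 * ((m : ℤ) : ℝ)|)^2 := by nlinarith [hWpos.le, abs_nonneg (2 * ((m : ℤ) : ℝ))]
    calc f m ^ 2 = 1 / ((1 + |2 * ((m : ℤ) : ℝ)|)^2 * |(n:ℝ) - (m : ℤ)|^2) := by
          rw [hfdef, div_pow, one_pow, mul_pow]
      _ ≤ 1 / (W^2 * |(n:ℝ) - (m : ℤ)|^2) := by
          apply one_div_le_one_div_of_le (by positivity)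
          exact mul_le_mul_of_nonneg_right hWsq hd2.le
      _ = (1/W^2) * (1 / ((n:ℝ) - (m : ℤ))^2) := by rw [sq_abs, one_div_mul_one_div]
  have hsumdist : (∑' m : T, 1 / ((n:ℝ) - (m : ℤ))^2) ≤ π^2/3 := by
    rw [← my_int_basel]
    refine Summable.tsum_le_tsum_of_inj _ einj (fun c _ => by positivity) (fun m => ?_) hcomp hbase
    refine le_of_eq ?_
    push_cast
    ring
  have hpisq : π^2/3 ≤ 4 := by nlinarith [pi_lt_d2, pi_pos]
  have hfsum_le : (∑' m : T, f m ^ 2) ≤ 4 / W^2 := by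
    calc (∑' m : T, f m ^ 2) ≤ ∑' m : T, (1/W^2) * (1 / ((n:ℝ) - (m : ℤ))^2) :=
          Summable.tsum_le_tsum hfW hf2 (hcomp.mul_left _)
      _ = (1/W^2) * ∑' m : T, 1 / ((n:ℝ) - (m : ℤ))^2 := tsum_mul_left
      _ ≤ (1/W^2) * 4 := by
          have := hsumdist.trans hpisq
          have h0 : (0:ℝ) ≤ 1/W^2 := by positivity
          nlinarith
      _ = 4 / W^2 := by ring
  have hsqrtf : √(∑' m : T, f m ^ 2) ≤ 2 / W := by
    have h4 : (4:ℝ) / W^2 = (2/W)^2 := by field_simp; ring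
    calc √(∑' m : T, f m ^ 2) ≤ √(4/W^2) :=
          Real.sqrt_le_sqrt hfsum_le
      _ = 2/W := by rw [h4, Real.sqrt_sq (by positivity)]
  have hsqrtg : √(∑' m : T, g m ^ 2) ≤
      √(∑' m : {m : ℤ // N < |m|}, (1 + |2 * ((m : ℤ) : ℝ)|) ^ 2 * ‖γ m‖ ^ 2) := by
    apply Real.sqrt_le_sqrt
    refine Summable.tsum_le_tsum_of_inj _ e2inj (fun c _ => by positivity) (fun m => ?_) hg2 hsum
    exact le_of_eq (by rw [hgdef, mul_pow])
  calc (∑' m : T, ‖γ m‖ / |(n : ℝ) - (m : ℤ)|) = ∑' m : T, f m * g m := key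
    _ ≤ √(∑' m : T, f m ^ 2) * √(∑' m : T, g m ^ 2) := my_tsum_CS f g hfnn hgnn hf2 hg2
    _ ≤ (2/W) * √(∑' m : {m : ℤ // N < |m|}, (1 + |2 * ((m : ℤ) : ℝ)|) ^ 2 * ‖γ m‖ ^ 2) := by
        apply mul_le_mul hsqrtf hsqrtg (Real.sqrt_nonneg _)
        positivity
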